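/- Generalized Barnett formula: if f has degree d with nonzero leading coefficient and g is a polynomial of degree ≤ d, then B(g)·B(1)^{-1} = g(X), where X is the companion matrix of f and B(1), B(g) are the Bezout matrices of 1 and g written in the monomial index sets of size max(d, deg g) = d. -/

import Mathlib

open MvPolynomial

/-- The companion matrix of `f = a_0 x^d + ⋯ + a_d`: 1's on the subdiagonal and
last column `(-a_d/a_0, …, -a_1/a_0)ᵀ`. -/
noncomputable def companionMatrix (f : Polynomial ℂ) :
    Matrix (Fin f.natDegree) (Fin f.natDegree) ℂ :=
  Matrix.of fun i j =>
    if (j : ℕ) = f.natDegree - 1 then -f.coeff i / f.leadingCoeff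
    else if (i : ℕ) = (j : ℕ) + 1 then 1 else 0


open Finset Matrix in
noncomputable abbrev RR := MvPolynomial (Fin 2) ℂ

open Finset Matrix

lemma sumA (p : Polynomial ℂ) (x y : RR) :
    Polynomial.aeval x p - Polynomial.aeval y p =
      (x - y) * ∑ k ∈ Finset.range (p.natDegree + 1),
        MvPolynomial.C (p.coeff k) * ∑ i ∈ Finset.range k, x ^ i * y ^ (k - 1 - i) := by
  rw [Polynomial.aeval_eq_sum_range (x := x), Polynomial.aeval_eq_sum_range (x := y),
    ← Finset.sum_sub_distrib, Finset.mul_sum]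
  refine Finset.sum_congr rfl fun k _ => ?_
  have h := geom_sum₂_mul x y k
  rw [Algebra.smul_def, Algebra.smul_def, ← mul_sub, ← h, MvPolynomial.algebraMap_eq]
  ring

lemma sumB (p : Polynomial ℂ) (d : ℕ) (hd : p.natDegree ≤ d) (x y : RR) :
    ∑ k ∈ Finset.range (d + 1),
        MvPolynomial.C (p.coeff k) * ∑ i ∈ Finset.range k, x ^ i * y ^ (k - 1 - i) =
      ∑ α : Fin d, ∑ β : Fin d, MvPolynomial.C (p.coeff (α + β + 1)) * x ^ (α : ℕ) * y ^ (β : ℕ) := by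
  have hL : (∑ k ∈ Finset.range (d + 1),
      MvPolynomial.C (p.coeff k) * ∑ i ∈ Finset.range k, x ^ i * y ^ (k - 1 - i)) =
      ∑ q ∈ (Finset.range (d+1)).sigma (fun k => Finset.range k),
        MvPolynomial.C (p.coeff q.1) * x ^ q.2 * y ^ (q.1 - 1 - q.2) := by
    rw [Finset.sum_sigma]
    exact Finset.sum_congr rfl fun k _ => by rw [Finset.mul_sum]; exact Finset.sum_congr rfl fun i _ => by ring
  have hR : (∑ α : Fin d, ∑ β : Fin d,
      MvPolynomial.C (p.coeff (α + β + 1)) * x ^ (α : ℕ) * y ^ (β : ℕ)) =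
      ∑ q ∈ Finset.range d ×ˢ Finset.range d,
        MvPolynomial.C (p.coeff (q.1 + q.2 + 1)) * x ^ q.1 * y ^ q.2 := by
    rw [Finset.sum_product]
    rw [← Fin.sum_univ_eq_sum_range (fun a => ∑ b ∈ Finset.range d,
        MvPolynomial.C (p.coeff (a + b + 1)) * x ^ a * y ^ b)]
    exact Finset.sum_congr rfl fun a _ => by
      rw [← Fin.sum_univ_eq_sum_range (fun b => MvPolynomial.C (p.coeff ((a:ℕ) + b + 1)) * x ^ (a:ℕ) * y ^ b)]
  rw [hL, hR]
  rw [← Finset.sum_filter_add_sum_filter_not (Finset.range d ×ˢ Finset.range d)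
      (fun q => q.1 + q.2 < d)]
  have h0 : ∑ q ∈ (Finset.range d ×ˢ Finset.range d).filter (fun q => ¬ q.1 + q.2 < d),
      MvPolynomial.C (p.coeff (q.1 + q.2 + 1)) * x ^ q.1 * y ^ q.2 = 0 := by
    refine Finset.sum_eq_zero fun q hq => ?_
    simp only [Finset.mem_filter, not_lt] at hq
    rw [Polynomial.coeff_eq_zero_of_natDegree_lt (by omega), map_zero, zero_mul, zero_mul]
  rw [h0, add_zero]
  refine Finset.sum_nbij' (fun q => (q.2, q.1 - 1 - q.2)) (fun q => ⟨q.1 + q.2 + 1, q.1⟩)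
    ?_ ?_ ?_ ?_ ?_
  · rintro ⟨k, i⟩ hq
    simp only [Finset.mem_sigma, Finset.mem_range] at hq
    simp only [Finset.mem_filter, Finset.mem_product, Finset.mem_range]
    omega
  · rintro ⟨a, b⟩ hq
    simp only [Finset.mem_filter, Finset.mem_product, Finset.mem_range] at hq
    simp only [Finset.mem_sigma, Finset.mem_range]
    omega
  · rintro ⟨k, i⟩ hq
    simp only [Finset.mem_sigma, Finset.mem_range] at hq
    simp only [Sigma.mk.inj_iff, heq_eq_eq, and_true]
    omega
  · rintro ⟨a, b⟩ hq
    simp only [Finset.mem_filter, Finset.mem_product, Finset.mem_range] at hq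
    simp only [Prod.mk.injEq, true_and]
    omega
  · rintro ⟨k, i⟩ hq
    simp only [Finset.mem_sigma, Finset.mem_range] at hq
    have hk : i + (k - 1 - i) + 1 = k := by omega
    simp only [hk]

lemma my_vecMul_smul {d : ℕ} (b : ℂ) (M : Matrix (Fin d) (Fin d) RR) (x : Fin d → RR) :
    x ᵥ* (b • M) = b • (x ᵥ* M) := by
  funext j
  simp only [Matrix.vecMul, dotProduct, Matrix.smul_apply, Pi.smul_apply, Finset.smul_sum]
  exact Finset.sum_congr rfl fun i _ => mul_smul_comm _ _ _

lemma my_vecMul_sum {d : ℕ} (s : Finset ℕ) (Ms : ℕ → Matrix (Fin d) (Fin d) RR) (x : Fin d → RR) :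
    x ᵥ* (∑ k ∈ s, Ms k) = ∑ k ∈ s, x ᵥ* (Ms k) := by
  funext j
  simp only [Matrix.vecMul, dotProduct, Matrix.sum_apply, Finset.sum_apply,
    Finset.mul_sum]
  rw [Finset.sum_comm]

lemma vecMul_companion (f : Polynomial ℂ) (hf : f.leadingCoeff ≠ 0) (t : RR) :
    (fun j : Fin f.natDegree => t ^ (j : ℕ)) ᵥ* ((companionMatrix f).map (algebraMap ℂ RR)) =
      t • (fun j : Fin f.natDegree => t ^ (j : ℕ)) -
        (Polynomial.aeval t f) •
          (fun j : Fin f.natDegree =>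
            if (j : ℕ) = f.natDegree - 1 then algebraMap ℂ RR f.leadingCoeff⁻¹ else 0) := by
  have hsum : Polynomial.aeval t f =
      (∑ i : Fin f.natDegree, t ^ (i : ℕ) * algebraMap ℂ RR (f.coeff i)) +
        algebraMap ℂ RR f.leadingCoeff * t ^ f.natDegree := by
    rw [Polynomial.aeval_eq_sum_range, Finset.sum_range_succ, Polynomial.coeff_natDegree,
      Algebra.smul_def]
    congr 1
    rw [Fin.sum_univ_eq_sum_range (fun i => t ^ i * algebraMap ℂ RR (f.coeff i))]
    exact Finset.sum_congr rfl fun i _ => by rw [Algebra.smul_def]; ring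
  funext j
  have hjlt := j.isLt
  simp only [Matrix.vecMul, dotProduct, Matrix.map_apply, companionMatrix,
    Matrix.of_apply, Pi.sub_apply, Pi.smul_apply, smul_eq_mul]
  by_cases hj : (j : ℕ) = f.natDegree - 1
  · simp only [hj, eq_self_iff_true, if_true]
    have hL : algebraMap ℂ RR f.leadingCoeff * algebraMap ℂ RR f.leadingCoeff⁻¹ = 1 := by
      rw [← _root_.map_mul, mul_inv_cancel₀ hf, _root_.map_one]
    have ht : t * t ^ (f.natDegree - 1) = t ^ f.natDegree := by
      rw [← pow_succ']
      congr 1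
      omega
    have e2 : (∑ i : Fin f.natDegree, t ^ (i : ℕ) * algebraMap ℂ RR (-f.coeff i / f.leadingCoeff))
        = -(∑ i : Fin f.natDegree, t ^ (i : ℕ) * algebraMap ℂ RR (f.coeff i)) *
            algebraMap ℂ RR f.leadingCoeff⁻¹ := by
      rw [neg_mul, Finset.sum_mul, ← Finset.sum_neg_distrib]
      refine Finset.sum_congr rfl fun i _ => ?_
      rw [div_eq_mul_inv, _root_.map_mul, map_neg]
      ring
    rw [e2, hsum]
    linear_combination t ^ f.natDegree * hL - ht
  · simp only [if_neg hj]
    have hj2 : (j : ℕ) + 1 < f.natDegree := by omega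
    rw [Finset.sum_eq_single (⟨(j : ℕ) + 1, hj2⟩ : Fin f.natDegree)]
    · simp only [eq_self_iff_true, if_true, _root_.map_one, mul_one, mul_zero, sub_zero]
      rw [← pow_succ']
    · intro b _ hb
      rw [if_neg (fun h => hb (Fin.ext h)), map_zero, mul_zero]
    · simp

lemma vecMul_pow (f : Polynomial ℂ) (hf : f.leadingCoeff ≠ 0) (t : RR) (n : ℕ) :
    ∃ r : Fin f.natDegree → RR,
      (fun j : Fin f.natDegree => t ^ (j : ℕ)) ᵥ*
          ((companionMatrix f).map (algebraMap ℂ RR)) ^ n =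
        t ^ n • (fun j : Fin f.natDegree => t ^ (j : ℕ)) - (Polynomial.aeval t f) • r := by
  induction n with
  | zero =>
    exact ⟨0, by simp [Matrix.vecMul_one]⟩
  | succ n ih =>
    obtain ⟨r, hr⟩ := ih
    refine ⟨t ^ n • (fun j : Fin f.natDegree =>
      if (j : ℕ) = f.natDegree - 1 then algebraMap ℂ RR f.leadingCoeff⁻¹ else 0) +
      r ᵥ* ((companionMatrix f).map (algebraMap ℂ RR)), ?_⟩
    rw [pow_succ, ← Matrix.vecMul_vecMul, hr, Matrix.sub_vecMul, Matrix.smul_vecMul,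
      Matrix.smul_vecMul, vecMul_companion f hf t]
    rw [smul_sub, smul_smul, ← pow_succ]
    rw [smul_add, smul_comm (t ^ n) (Polynomial.aeval t f)]
    abel

lemma vecMul_aeval (f : Polynomial ℂ) (hf : f.leadingCoeff ≠ 0) (t : RR) (g : Polynomial ℂ) :
    ∃ r : Fin f.natDegree → RR,
      (fun j : Fin f.natDegree => t ^ (j : ℕ)) ᵥ*
          (Polynomial.aeval ((companionMatrix f).map (algebraMap ℂ RR)) g) =
        (Polynomial.aeval t g) • (fun j : Fin f.natDegree => t ^ (j : ℕ)) -
          (Polynomial.aeval t f) • r := by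
  choose r hr using vecMul_pow f hf t
  refine ⟨∑ k ∈ Finset.range (g.natDegree + 1), g.coeff k • r k, ?_⟩
  rw [Polynomial.aeval_eq_sum_range (x := ((companionMatrix f).map (algebraMap ℂ RR))),
    my_vecMul_sum]
  have : ∀ k ∈ Finset.range (g.natDegree + 1),
      (fun j : Fin f.natDegree => t ^ (j : ℕ)) ᵥ*
        (g.coeff k • ((companionMatrix f).map (algebraMap ℂ RR)) ^ k) =
      (g.coeff k • t ^ k) • (fun j : Fin f.natDegree => t ^ (j : ℕ)) -
        (Polynomial.aeval t f) • (g.coeff k • r k) := by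
    intro k _
    rw [my_vecMul_smul, hr k, smul_sub, smul_comm (g.coeff k) (Polynomial.aeval t f),
      ← smul_assoc]
  rw [Finset.sum_congr rfl this, Finset.sum_sub_distrib, ← Finset.sum_smul, ← Finset.smul_sum,
    Polynomial.aeval_eq_sum_range (p := g) (x := t)]

lemma single_add_single_inj {a b a' b' : ℕ}
    (h : Finsupp.single (0 : Fin 2) a + Finsupp.single (1 : Fin 2) b =
      Finsupp.single (0 : Fin 2) a' + Finsupp.single (1 : Fin 2) b') : a = a' ∧ b = b' := by
  have h0 := DFunLike.congr_fun h 0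
  have h1 := DFunLike.congr_fun h 1
  simp [Finsupp.single_apply] at h0 h1
  exact ⟨h0, h1⟩

lemma coeff_double {d : ℕ} (M : Matrix (Fin d) (Fin d) ℂ) (a b : Fin d) :
    MvPolynomial.coeff (Finsupp.single (0 : Fin 2) (a : ℕ) + Finsupp.single (1 : Fin 2) (b : ℕ))
      (∑ α : Fin d, ∑ β : Fin d, MvPolynomial.C (M α β) * X 0 ^ (α : ℕ) * X 1 ^ (β : ℕ)) =
      M a b := by
  have hmono : ∀ (α β : Fin d) (c : ℂ),
      MvPolynomial.C c * X 0 ^ (α : ℕ) * X 1 ^ (β : ℕ) =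
        monomial (Finsupp.single (0 : Fin 2) (α : ℕ) + Finsupp.single (1 : Fin 2) (β : ℕ)) c := by
    intro α β c
    rw [MvPolynomial.C_mul_X_pow_eq_monomial, MvPolynomial.X_pow_eq_monomial,
      MvPolynomial.monomial_mul, mul_one]
  simp only [hmono]
  rw [MvPolynomial.coeff_sum]
  rw [Finset.sum_eq_single a]
  · rw [MvPolynomial.coeff_sum, Finset.sum_eq_single b]
    · rw [MvPolynomial.coeff_monomial, if_pos rfl]
    · intro β _ hβ
      rw [MvPolynomial.coeff_monomial, if_neg]
      intro h
      exact hβ (Fin.ext (single_add_single_inj h).2)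
    · simp
  · intro α _ hα
    rw [MvPolynomial.coeff_sum]
    refine Finset.sum_eq_zero fun β _ => ?_
    rw [MvPolynomial.coeff_monomial, if_neg]
    intro h
    exact hα (Fin.ext (single_add_single_inj h).1)
  · simp

lemma matrix_eq_of_sum_eq {d : ℕ} (M N : Matrix (Fin d) (Fin d) ℂ)
    (h : (∑ α : Fin d, ∑ β : Fin d,
        MvPolynomial.C (M α β) * X (0 : Fin 2) ^ (α : ℕ) * X (1 : Fin 2) ^ (β : ℕ)) =
      ∑ α : Fin d, ∑ β : Fin d,
        MvPolynomial.C (N α β) * X (0 : Fin 2) ^ (α : ℕ) * X (1 : Fin 2) ^ (β : ℕ)) :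
    M = N := by
  ext a b
  have h2 : MvPolynomial.coeff
      (Finsupp.single (0 : Fin 2) (a : ℕ) + Finsupp.single (1 : Fin 2) (b : ℕ))
      (∑ α : Fin d, ∑ β : Fin d, MvPolynomial.C (M α β) * X 0 ^ (α : ℕ) * X 1 ^ (β : ℕ)) =
      MvPolynomial.coeff
      (Finsupp.single (0 : Fin 2) (a : ℕ) + Finsupp.single (1 : Fin 2) (b : ℕ))
      (∑ α : Fin d, ∑ β : Fin d, MvPolynomial.C (N α β) * X 0 ^ (α : ℕ) * X 1 ^ (β : ℕ)) := by
    exact congrArg _ h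
  rwa [coeff_double, coeff_double] at h2

lemma dot_eq {d : ℕ} (M : Matrix (Fin d) (Fin d) ℂ) (x y : RR) :
    (fun α : Fin d => x ^ (α : ℕ)) ⬝ᵥ
        ((M.map (algebraMap ℂ RR)) *ᵥ (fun β : Fin d => y ^ (β : ℕ))) =
      ∑ α : Fin d, ∑ β : Fin d, MvPolynomial.C (M α β) * x ^ (α : ℕ) * y ^ (β : ℕ) := by
  simp only [dotProduct, Matrix.mulVec, Matrix.map_apply, Finset.mul_sum]
  refine Finset.sum_congr rfl fun α _ => Finset.sum_congr rfl fun β _ => ?_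
  rw [MvPolynomial.algebraMap_eq]
  ring

lemma X01_ne : (X 0 - X 1 : RR) ≠ 0 := by
  intro h
  have := congrArg (MvPolynomial.eval (fun i : Fin 2 => if i = 0 then (1 : ℂ) else 0)) h
  simp at this

lemma sumAB (p : Polynomial ℂ) (d : ℕ) (hd : p.natDegree ≤ d) (x y : RR) :
    Polynomial.aeval x p - Polynomial.aeval y p =
      (x - y) * ∑ α : Fin d, ∑ β : Fin d,
        MvPolynomial.C (p.coeff ((α : ℕ) + (β : ℕ) + 1)) * x ^ (α : ℕ) * y ^ (β : ℕ) := by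
  rw [sumA, ← sumB p d hd x y]
  congr 1
  refine Finset.sum_subset (Finset.range_subset_range.mpr (by omega)) ?_
  intro k hk hk'
  simp only [Finset.mem_range, not_lt] at hk'
  rw [Polynomial.coeff_eq_zero_of_natDegree_lt (by omega), map_zero, zero_mul]

lemma aeval_X_map (f : Polynomial ℂ) :
    Polynomial.aeval (Polynomial.X : Polynomial (MvPolynomial (Fin 1) ℂ)) f =
      f.map (algebraMap ℂ (MvPolynomial (Fin 1) ℂ)) := by
  have h := Polynomial.aeval_algHom_apply
    (Polynomial.mapAlgHom (Algebra.ofId ℂ (MvPolynomial (Fin 1) ℂ)))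
    (Polynomial.X : Polynomial ℂ) f
  rw [Polynomial.aeval_X_left_apply] at h
  rw [Polynomial.coe_mapAlgHom] at h
  rw [Polynomial.map_X] at h
  rw [h]
  rfl

lemma algebraMap_mv_injective : Function.Injective (algebraMap ℂ (MvPolynomial (Fin 1) ℂ)) := by
  intro a b h
  have := congrArg (MvPolynomial.eval (fun _ => (0 : ℂ))) h
  simpa using this

lemma key_cancel (f : Polynomial ℂ) (hf : f.leadingCoeff ≠ 0) (hd : 0 < f.natDegree)
    (M : Matrix (Fin f.natDegree) (Fin f.natDegree) ℂ) (u : RR)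
    (h : (∑ α : Fin f.natDegree, ∑ β : Fin f.natDegree,
        MvPolynomial.C (M α β) * X (0 : Fin 2) ^ (α : ℕ) * X (1 : Fin 2) ^ (β : ℕ)) =
      Polynomial.aeval (X (0 : Fin 2)) f * u) : M = 0 := by
  set ψ := MvPolynomial.finSuccEquiv ℂ 1 with hψ
  have hfψ : ψ (Polynomial.aeval (X (0 : Fin 2)) f) =
      f.map (algebraMap ℂ (MvPolynomial (Fin 1) ℂ)) := by
    have h3 := Polynomial.aeval_algHom_apply ψ.toAlgHom (X (0 : Fin 2)) f
    simp only [AlgEquiv.toAlgHom_eq_coe, AlgEquiv.coe_algHom] at h3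
    rw [← h3, hψ, MvPolynomial.finSuccEquiv_X_zero, aeval_X_map]
  have hfm0 : f.map (algebraMap ℂ (MvPolynomial (Fin 1) ℂ)) ≠ 0 := by
    rw [Polynomial.map_ne_zero_iff algebraMap_mv_injective]
    exact Polynomial.leadingCoeff_ne_zero.mp hf
  have hfdeg : (f.map (algebraMap ℂ (MvPolynomial (Fin 1) ℂ))).natDegree = f.natDegree :=
    Polynomial.natDegree_map_eq_of_injective algebraMap_mv_injective f
  -- degree bound on the LHS
  have hdegL : (ψ (∑ α : Fin f.natDegree, ∑ β : Fin f.natDegree,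
      MvPolynomial.C (M α β) * X (0 : Fin 2) ^ (α : ℕ) * X (1 : Fin 2) ^ (β : ℕ))).natDegree
      ≤ f.natDegree - 1 := by
    rw [map_sum]
    refine Polynomial.natDegree_sum_le_of_forall_le _ _ fun α _ => ?_
    rw [map_sum]
    refine Polynomial.natDegree_sum_le_of_forall_le _ _ fun β _ => ?_
    rw [_root_.map_mul, _root_.map_mul, map_pow, map_pow, MvPolynomial.finSuccEquiv_X_zero]
    have h1 : ψ (X (1 : Fin 2)) = Polynomial.C (X (0 : Fin 1)) := by
      have : (1 : Fin 2) = Fin.succ 0 := rfl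
      rw [this, MvPolynomial.finSuccEquiv_X_succ]
    rw [h1]
    refine le_trans Polynomial.natDegree_mul_le ?_
    have hb : (Polynomial.C (X (0 : Fin 1)) ^ (β : ℕ) :
        Polynomial (MvPolynomial (Fin 1) ℂ)).natDegree = 0 := by
      rw [← map_pow, Polynomial.natDegree_C]
    rw [hb, add_zero]
    refine le_trans Polynomial.natDegree_mul_le ?_
    have hc : (ψ (MvPolynomial.C (M α β))).natDegree = 0 := by
      have : ψ (MvPolynomial.C (M α β)) = Polynomial.C (MvPolynomial.C (M α β)) := by
        simp [hψ, MvPolynomial.finSuccEquiv_apply]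
      rw [this, Polynomial.natDegree_C]
    rw [hc, Polynomial.natDegree_X_pow, zero_add]
    omega
  -- now conclude u = 0
  have hu : u = 0 := by
    by_contra hu
    have hψu : ψ u ≠ 0 := fun h0 => hu (by
      have := congrArg ψ.symm h0
      simpa using this)
    have := congrArg (fun p => (ψ p).natDegree) h
    rw [_root_.map_mul, hfψ] at this
    rw [Polynomial.natDegree_mul hfm0 hψu, hfdeg] at this
    omega
  rw [hu, mul_zero] at h
  refine matrix_eq_of_sum_eq M 0 ?_
  rw [h]
  refine (Finset.sum_eq_zero fun α _ => Finset.sum_eq_zero fun β _ => ?_).symm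
  simp

lemma det_E_ne (f : Polynomial ℂ) (hf : f.leadingCoeff ≠ 0) :
    (Matrix.of fun α β : Fin f.natDegree =>
      f.coeff ((α : ℕ) + (β : ℕ) + 1)).det ≠ 0 := by
  set E : Matrix (Fin f.natDegree) (Fin f.natDegree) ℂ :=
    Matrix.of fun α β => f.coeff ((α : ℕ) + (β : ℕ) + 1) with hE
  have hperm := Matrix.det_permute (Fin.revPerm) E
  have htri : (E.submatrix (⇑Fin.revPerm) id).BlockTriangular OrderDual.toDual := by
    intro i j hij
    simp only [OrderDual.toDual_lt_toDual] at hij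
    have hij' : (i : ℕ) < (j : ℕ) := hij
    simp only [Matrix.submatrix_apply, id, hE, Matrix.of_apply, Fin.revPerm_apply]
    refine Polynomial.coeff_eq_zero_of_natDegree_lt ?_
    have hi := i.isLt
    have : ((Fin.rev i : Fin f.natDegree) : ℕ) = f.natDegree - ((i : ℕ) + 1) := Fin.val_rev i
    omega
  have hdet := Matrix.det_of_lowerTriangular _ htri
  have hdiag : ∀ i : Fin f.natDegree, (E.submatrix (⇑Fin.revPerm) id) i i = f.leadingCoeff := by
    intro i
    simp only [Matrix.submatrix_apply, id, hE, Matrix.of_apply, Fin.revPerm_apply]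
    have hi := i.isLt
    have hv : ((Fin.rev i : Fin f.natDegree) : ℕ) = f.natDegree - ((i : ℕ) + 1) := Fin.val_rev i
    rw [hv, ← Polynomial.coeff_natDegree (p := f)]
    congr 1
    omega
  rw [Finset.prod_congr rfl (fun i _ => hdiag i), Finset.prod_const] at hdet
  intro h0
  rw [h0, mul_zero] at hperm
  rw [hperm] at hdet
  exact pow_ne_zero _ hf hdet.symm

lemma map_aeval_matrix {d : ℕ} (A : Matrix (Fin d) (Fin d) ℂ) (g : Polynomial ℂ) :
    (Polynomial.aeval A g).map (algebraMap ℂ RR) =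
      Polynomial.aeval (A.map (algebraMap ℂ RR)) g := by
  have h := Polynomial.aeval_algHom_apply
    ((Algebra.ofId ℂ RR).mapMatrix (m := Fin d)) A g
  rw [AlgHom.mapMatrix_apply, AlgHom.mapMatrix_apply] at h
  exact h.symm

/-- Generalized Barnett formula: for `g` of degree at most `d = deg f`,
`B(g)·B(1)⁻¹ = g(X)`, where the Bezout matrices are indexed by `0,…,d−1`. -/
theorem barnett_formula_generalized (f g : Polynomial ℂ) (hf : f.leadingCoeff ≠ 0)
    (hg : g.natDegree ≤ f.natDegree)
    (δ1 δg : MvPolynomial (Fin 2) ℂ)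
    (hδ1 : (X 0 - X 1) * δ1 = Polynomial.aeval (X 0) f - Polynomial.aeval (X 1) f)
    (hδg : (X 0 - X 1) * δg =
      Polynomial.aeval (X 0) f * Polynomial.aeval (X 1) g -
        Polynomial.aeval (X 1) f * Polynomial.aeval (X 0) g)
    (B1 Bg : Matrix (Fin f.natDegree) (Fin f.natDegree) ℂ)
    (hB1 : δ1 = ∑ α : Fin f.natDegree, ∑ β : Fin f.natDegree,
      MvPolynomial.C (B1 α β) * X 0 ^ (α : ℕ) * X 1 ^ (β : ℕ))
    (hBg : δg = ∑ α : Fin f.natDegree, ∑ β : Fin f.natDegree,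
      MvPolynomial.C (Bg α β) * X 0 ^ (α : ℕ) * X 1 ^ (β : ℕ)) :
    Bg * B1⁻¹ = Polynomial.aeval (companionMatrix f) g := by
  by_cases hd0 : f.natDegree = 0
  · ext i j
    exact absurd i.isLt (by omega)
  have hd : 0 < f.natDegree := Nat.pos_of_ne_zero hd0
  set E : Matrix (Fin f.natDegree) (Fin f.natDegree) ℂ :=
    Matrix.of fun α β => f.coeff ((α : ℕ) + (β : ℕ) + 1) with hEdef
  -- B1 is the explicit Bezout matrix of (f, 1)
  have hδ1E : δ1 = ∑ α : Fin f.natDegree, ∑ β : Fin f.natDegree,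
      MvPolynomial.C (E α β) * X 0 ^ (α : ℕ) * X 1 ^ (β : ℕ) := by
    refine mul_left_cancel₀ X01_ne ?_
    rw [hδ1, sumAB f f.natDegree le_rfl (X 0) (X 1)]
    rfl
  have hB1E : B1 = E := matrix_eq_of_sum_eq B1 E (hB1.symm.trans hδ1E)
  have hdet : IsUnit B1.det := by
    rw [hB1E]
    exact isUnit_iff_ne_zero.mpr (det_E_ne f hf)
  -- the vector identity
  obtain ⟨r, hr⟩ := vecMul_aeval f hf (X 0) g
  set gX := Polynomial.aeval (companionMatrix f) g with hgX
  set hterm : RR := r ⬝ᵥ (B1.map (algebraMap ℂ RR) *ᵥ fun β : Fin f.natDegree =>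
    (X 1 : RR) ^ (β : ℕ)) with hhterm
  have hA : (∑ α : Fin f.natDegree, ∑ β : Fin f.natDegree,
      MvPolynomial.C ((gX * B1) α β) * X 0 ^ (α : ℕ) * X 1 ^ (β : ℕ)) =
      Polynomial.aeval (X 0) g * δ1 - Polynomial.aeval (X 0) f * hterm := by
    rw [← dot_eq (gX * B1) (X 0) (X 1)]
    rw [Matrix.map_mul, map_aeval_matrix, ← Matrix.mulVec_mulVec, Matrix.dotProduct_mulVec, hr,
      sub_dotProduct, smul_dotProduct, smul_dotProduct, smul_eq_mul,
      smul_eq_mul, dot_eq B1 (X 0) (X 1), ← hB1, hhterm]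
  -- the division identity for g
  have hginner := sumAB g f.natDegree hg (X 0) (X 1)
  set u0 : RR := ∑ α : Fin f.natDegree, ∑ β : Fin f.natDegree,
    MvPolynomial.C (g.coeff ((α : ℕ) + (β : ℕ) + 1)) * X 0 ^ (α : ℕ) * X 1 ^ (β : ℕ) with hu0
  have hkey : Polynomial.aeval (X 0) g * δ1 - δg = Polynomial.aeval (X 0) f * u0 := by
    refine mul_left_cancel₀ X01_ne ?_
    have e : (X 0 - X 1 : RR) * (Polynomial.aeval (X 0) g * δ1 - δg) =
        Polynomial.aeval (X 0) f * ((X 0 - X 1) * u0) := by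
      calc (X 0 - X 1 : RR) * (Polynomial.aeval (X 0) g * δ1 - δg)
          = Polynomial.aeval (X 0) g * ((X 0 - X 1) * δ1) - (X 0 - X 1) * δg := by ring
        _ = Polynomial.aeval (X 0) g *
              (Polynomial.aeval (X 0) f - Polynomial.aeval (X 1) f) -
              (Polynomial.aeval (X 0) f * Polynomial.aeval (X 1) g -
                Polynomial.aeval (X 1) f * Polynomial.aeval (X 0) g) := by rw [hδ1, hδg]
        _ = Polynomial.aeval (X 0) f *
              (Polynomial.aeval (X 0) g - Polynomial.aeval (X 1) g) := by ring
        _ = Polynomial.aeval (X 0) f * ((X 0 - X 1) * u0) := by rw [hginner]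
    rw [e]
    ring
  -- assemble
  have hS : (∑ α : Fin f.natDegree, ∑ β : Fin f.natDegree,
      MvPolynomial.C ((gX * B1 - Bg) α β) * X 0 ^ (α : ℕ) * X 1 ^ (β : ℕ)) =
      Polynomial.aeval (X 0) f * (u0 - hterm) := by
    have hdiff : (∑ α : Fin f.natDegree, ∑ β : Fin f.natDegree,
        MvPolynomial.C ((gX * B1 - Bg) α β) * X (0 : Fin 2) ^ (α : ℕ) * X (1 : Fin 2) ^ (β : ℕ)) =
        (∑ α : Fin f.natDegree, ∑ β : Fin f.natDegree,
          MvPolynomial.C ((gX * B1) α β) * X (0 : Fin 2) ^ (α : ℕ) * X (1 : Fin 2) ^ (β : ℕ)) -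
        (∑ α : Fin f.natDegree, ∑ β : Fin f.natDegree,
          MvPolynomial.C (Bg α β) * X (0 : Fin 2) ^ (α : ℕ) * X (1 : Fin 2) ^ (β : ℕ)) := by
      rw [← Finset.sum_sub_distrib]
      refine Finset.sum_congr rfl fun α _ => ?_
      rw [← Finset.sum_sub_distrib]
      refine Finset.sum_congr rfl fun β _ => ?_
      rw [Matrix.sub_apply, map_sub]
      ring
    refine hdiff.trans ?_
    rw [hA, ← hBg]
    linear_combination hkey
  have hD0 := key_cancel f hf hd (gX * B1 - Bg) (u0 - hterm) hS
  have hBgEq : Bg = gX * B1 := by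
    have := sub_eq_zero.mp hD0
    exact this.symm
  rw [hBgEq, Matrix.mul_assoc, Matrix.mul_nonsing_inv B1 hdet, Matrix.mul_one]
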